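/- arXiv:1508.02986 — 3 statements merged into one kernel-verified Lean document; each statement's English description precedes it below -/
import Mathlib

section
/- If a hypercone C ⊂ ℝ^{n+1} of base B(O,R), height H and apex Z is cut by the hyperplane orthogonal to its axis passing through its center of gravity (at height H/(n+2) above the base), then the volume of the part containing the apex equals Vol(C) · (1 − 1/(n+2))^{n+1} = Vol(C) / (1 + 1/(n+1))^{n+1}, which is at least e^{-1} · Vol(C). -/
open MeasureTheory Pointwise

private instance coneCutHaar (n : ℕ) :
    (volume : Measure (EuclideanSpace ℝ (Fin n) × ℝ)).IsAddHaarMeasure :=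
  Measure.prod.instIsAddHaarMeasure volume volume

private lemma cone_cut_aux_iff {lam h0 H R d t : ℝ} (hlam0 : 0 < lam) (hh0 : 0 ≤ h0)
    (hsum : h0 + lam * H = H) :
    ((0 ≤ lam⁻¹ * (t - h0) ∧ lam⁻¹ * (t - h0) ≤ H) ∧ lam⁻¹ * d ≤ (H - lam⁻¹ * (t - h0)) / H * R)
    ↔ ((0 ≤ t ∧ t ≤ H) ∧ d ≤ (H - t) / H * R) ∧ h0 ≤ t := by
  have hlam := hlam0.ne'
  have h1 : (0 ≤ lam⁻¹ * (t - h0)) ↔ h0 ≤ t := by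
    rw [mul_nonneg_iff_of_pos_left (inv_pos.mpr hlam0), sub_nonneg]
  have h2 : (lam⁻¹ * (t - h0) ≤ H) ↔ t ≤ H := by
    rw [inv_mul_le_iff₀ hlam0]
    constructor <;> intro <;> linarith
  have h3 : (H - lam⁻¹ * (t - h0)) / H * R = lam⁻¹ * ((H - t) / H * R) := by
    have : H - lam⁻¹ * (t - h0) = lam⁻¹ * (H - t) := by
      field_simp; linarith
    rw [this]; ring
  have h4 : (lam⁻¹ * d ≤ lam⁻¹ * ((H - t) / H * R)) ↔ d ≤ (H - t) / H * R :=
    mul_le_mul_iff_right₀ (inv_pos.mpr hlam0)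
  rw [h1, h2, h3, h4]
  constructor
  · rintro ⟨⟨ha, hb⟩, hc⟩; exact ⟨⟨⟨by linarith, hb⟩, hc⟩, ha⟩
  · rintro ⟨⟨⟨ha, hb⟩, hc⟩, hd'⟩; exact ⟨⟨hd', hb⟩, hc⟩

/-- Cutting a hypercone by the hyperplane through its center of gravity orthogonal
to its axis: the apex-side part has volume Vol(C)·(1 − 1/(n+2))^{n+1}
= Vol(C)/(1 + 1/(n+1))^{n+1} ≥ e⁻¹·Vol(C). -/
theorem cone_cut_at_centerOfGravity (n : ℕ) (O : EuclideanSpace ℝ (Fin n)) (R H : ℝ)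
    (hR : 0 < R) (hH : 0 < H)
    (C Cplus : Set (EuclideanSpace ℝ (Fin n) × ℝ))
    (hC : C = {p | p.2 ∈ Set.Icc (0:ℝ) H ∧ dist p.1 O ≤ (H - p.2) / H * R})
    (hCp : Cplus = C ∩ {p | H / ((n : ℝ) + 2) ≤ p.2}) :
    (volume Cplus).toReal = (volume C).toReal * (1 - 1 / ((n : ℝ) + 2)) ^ (n + 1) ∧
    (volume Cplus).toReal = (volume C).toReal / (1 + 1 / ((n : ℝ) + 1)) ^ (n + 1) ∧
    (Real.exp 1)⁻¹ * (volume C).toReal ≤ (volume Cplus).toReal := by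
  have hn1 : (0:ℝ) < (n:ℝ) + 1 := by positivity
  have hn2 : (0:ℝ) < (n:ℝ) + 2 := by positivity
  obtain ⟨lam, hlam⟩ : ∃ lam : ℝ, lam = ((n:ℝ)+1)/((n:ℝ)+2) := ⟨_, rfl⟩
  obtain ⟨h0, hh0⟩ : ∃ h0 : ℝ, h0 = H/((n:ℝ)+2) := ⟨_, rfl⟩
  rw [← hh0] at hCp
  have hlam0 : 0 < lam := by rw [hlam]; positivity
  have hh0nn : 0 ≤ h0 := by rw [hh0]; positivity
  have hsum : h0 + lam * H = H := by rw [hlam, hh0]; field_simp; ring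
  -- the apex part is a homothetic copy of the cone with ratio lam
  have key : Cplus = (((1 - lam) • O, h0) : EuclideanSpace ℝ (Fin n) × ℝ) +ᵥ (lam • C) := by
    ext p
    rw [Set.mem_vadd_set_iff_neg_vadd_mem, Set.mem_smul_set_iff_inv_smul_mem₀ hlam0.ne', hCp, hC]
    have e2 : (lam⁻¹ • (-((((1 - lam) • O, h0)) : EuclideanSpace ℝ (Fin n) × ℝ) +ᵥ p)).2
        = lam⁻¹ * (p.2 - h0) := by
      simp only [vadd_eq_add, Prod.smul_snd, Prod.snd_add, Prod.snd_neg, smul_eq_mul]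
      ring
    have e1 : (lam⁻¹ • (-((((1 - lam) • O, h0)) : EuclideanSpace ℝ (Fin n) × ℝ) +ᵥ p)).1
        = lam⁻¹ • (p.1 - (1 - lam) • O) := by
      simp only [vadd_eq_add, Prod.smul_fst, Prod.fst_add, Prod.fst_neg]
      module
    have edist : dist (lam⁻¹ • (p.1 - (1 - lam) • O)) O = lam⁻¹ * dist p.1 O := by
      have h : lam⁻¹ • (p.1 - (1 - lam) • O) - O = lam⁻¹ • (p.1 - O) := by
        match_scalars <;> field_simp <;> ring
      rw [dist_eq_norm, dist_eq_norm, h, norm_smul]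
      simp [abs_of_pos (inv_pos.mpr hlam0)]
      exact Or.inl hlam0.le
    simp only [Set.mem_setOf_eq, Set.mem_inter_iff, Set.mem_Icc, e2, e1, edist]
    exact (cone_cut_aux_iff hlam0 hh0nn hsum).symm
  -- volume of the homothetic copy
  have hvol : (volume Cplus).toReal = (volume C).toReal * lam ^ (n + 1) := by
    rw [key]
    have h1 : volume ((((1 - lam) • O, h0) : EuclideanSpace ℝ (Fin n) × ℝ) +ᵥ lam • C)
        = volume (lam • C) := by
      have : (((1 - lam) • O, h0) : EuclideanSpace ℝ (Fin n) × ℝ) +ᵥ lam • C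
          = (fun x => -(((1 - lam) • O, h0) : EuclideanSpace ℝ (Fin n) × ℝ) + x) ⁻¹' (lam • C) := by
        ext p; simp [Set.mem_vadd_set_iff_neg_vadd_mem, vadd_eq_add]
      rw [this]
      exact measure_preimage_add volume _ _
    rw [h1, Measure.addHaar_smul]
    have h2 : Module.finrank ℝ (EuclideanSpace ℝ (Fin n) × ℝ) = n + 1 := by
      simp [Module.finrank_prod, finrank_euclideanSpace_fin]
    rw [h2, ENNReal.toReal_mul, ENNReal.toReal_ofReal (by positivity)]
    rw [abs_of_nonneg (by positivity)]
    ring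
  have hlam1 : lam = 1 - 1 / ((n:ℝ) + 2) := by rw [hlam]; field_simp; ring
  have hlaminv : 1 + 1 / ((n:ℝ) + 1) = lam⁻¹ := by rw [hlam]; field_simp; ring
  have hepow : (1 + 1 / ((n:ℝ) + 1)) ^ (n + 1) ≤ Real.exp 1 := by
    have h1 : 1 + 1 / ((n:ℝ) + 1) ≤ Real.exp (1 / ((n:ℝ) + 1)) := by
      have := Real.add_one_le_exp (1 / ((n:ℝ) + 1))
      linarith
    calc (1 + 1 / ((n:ℝ) + 1)) ^ (n + 1)
        ≤ (Real.exp (1 / ((n:ℝ) + 1))) ^ (n + 1) :=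
          pow_le_pow_left₀ (by positivity) h1 _
      _ = Real.exp (((n:ℝ) + 1) * (1 / ((n:ℝ) + 1))) := by
          rw [← Real.exp_nat_mul]
          push_cast
          ring_nf
      _ = Real.exp 1 := by
          congr 1
          field_simp
  refine ⟨by rw [hvol, hlam1], ?_, ?_⟩
  · rw [hvol, hlaminv, div_eq_mul_inv, ← inv_pow, inv_inv]
  · rw [hvol]
    have hpow_pos : (0:ℝ) < (1 + 1 / ((n:ℝ) + 1)) ^ (n + 1) := by positivity
    have hinv : (Real.exp 1)⁻¹ ≤ lam ^ (n + 1) := by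
      have h2 : ((1 + 1 / ((n:ℝ) + 1)) ^ (n + 1))⁻¹ = lam ^ (n + 1) := by
        rw [hlaminv, ← inv_pow, inv_inv]
      rw [← h2]
      exact inv_anti₀ hpow_pos hepow
    have := mul_le_mul_of_nonneg_left hinv (ENNReal.toReal_nonneg (a := volume C))
    linarith [mul_le_mul_of_nonneg_right hinv (ENNReal.toReal_nonneg (a := volume C))]
end

section
/- If a convex body K ⊂ ℝ^{n+1} is spherically symmetric along the axis e_{n+1} and is cut by a hyperplane through its center of gravity orthogonal to e_{n+1}, and C is the cone with the same base disk K ∩ W, apex on the positive axis, chosen so that Vol(C^+) = Vol(K^+) and Vol(C) = Vol(K), then the axial coordinate of cg(C) is at least that of cg(K). -/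
open MeasureTheory Metric Set


lemma radius_le_of_subset {n : ℕ} (hn : 0 < n) {a b : ℝ} (ha : 0 ≤ a)
    (h : Metric.closedBall (0:EuclideanSpace ℝ (Fin n)) a ⊆ Metric.closedBall 0 b) : a ≤ b := by
  have hv : ‖(a • EuclideanSpace.single (⟨0, hn⟩ : Fin n) (1:ℝ) : EuclideanSpace ℝ (Fin n))‖ = a := by
    rw [norm_smul, EuclideanSpace.norm_single]
    simp [abs_of_nonneg ha]
  have h2 := h (by rw [mem_closedBall_zero_iff, hv])
  rwa [mem_closedBall_zero_iff, hv] at h2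

lemma comb_lemma {n : ℕ} (K : Set (EuclideanSpace ℝ (Fin n) × ℝ)) (hKconv : Convex ℝ K)
    {l1 l2 l r1 r2 s : ℝ}
    (h1 : Metric.closedBall (0:EuclideanSpace ℝ (Fin n)) r1 ⊆ {x | (x, l1) ∈ K})
    (h2 : Metric.closedBall (0:EuclideanSpace ℝ (Fin n)) r2 ⊆ {x | (x, l2) ∈ K})
    (hr1 : 0 ≤ r1) (hr2 : 0 ≤ r2) (hs0 : 0 ≤ s) (hs1 : s ≤ 1)
    (hl : l = s * l1 + (1 - s) * l2) :
    Metric.closedBall (0:EuclideanSpace ℝ (Fin n)) (s * r1 + (1 - s) * r2)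
      ⊆ {x | (x, l) ∈ K} := by
  intro z hz
  rw [mem_closedBall_zero_iff] at hz
  set R := s * r1 + (1 - s) * r2 with hR
  have hs1' : 0 ≤ 1 - s := by linarith
  have hRnn : 0 ≤ R := add_nonneg (mul_nonneg hs0 hr1) (mul_nonneg hs1' hr2)
  rcases eq_or_lt_of_le hRnn with hR0 | hR0
  · -- R = 0, hence z = 0
    have hz0 : z = 0 := by
      rw [← norm_le_zero_iff]
      rw [← hR0] at hz; exact hz
    subst hz0
    have m1 : ((0:EuclideanSpace ℝ (Fin n)), l1) ∈ K := h1 (mem_closedBall_self hr1)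
    have m2 : ((0:EuclideanSpace ℝ (Fin n)), l2) ∈ K := h2 (mem_closedBall_self hr2)
    have hmem := hKconv m1 m2 hs0 hs1' (by ring)
    have heq : s • ((0:EuclideanSpace ℝ (Fin n)), l1) + (1-s) • ((0:EuclideanSpace ℝ (Fin n)), l2)
        = ((0:EuclideanSpace ℝ (Fin n)), l) := by
      refine Prod.ext ?_ ?_
      · show s • (0:EuclideanSpace ℝ (Fin n)) + (1-s) • (0:EuclideanSpace ℝ (Fin n)) = 0
        simp
      · show s * l1 + (1-s) * l2 = l
        rw [hl]
    rwa [heq] at hmem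
  · -- R > 0
    set z1 : EuclideanSpace ℝ (Fin n) := (r1 / R) • z with hz1
    set z2 : EuclideanSpace ℝ (Fin n) := (r2 / R) • z with hz2
    have hn1 : ‖z1‖ ≤ r1 := by
      rw [hz1, norm_smul, Real.norm_eq_abs, abs_of_nonneg (div_nonneg hr1 hRnn)]
      calc r1 / R * ‖z‖ ≤ r1 / R * R := by
            apply mul_le_mul_of_nonneg_left hz (div_nonneg hr1 hRnn)
        _ = r1 := by field_simp
    have hn2 : ‖z2‖ ≤ r2 := by
      rw [hz2, norm_smul, Real.norm_eq_abs, abs_of_nonneg (div_nonneg hr2 hRnn)]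
      calc r2 / R * ‖z‖ ≤ r2 / R * R := by
            apply mul_le_mul_of_nonneg_left hz (div_nonneg hr2 hRnn)
        _ = r2 := by field_simp
    have m1 : (z1, l1) ∈ K := h1 (mem_closedBall_zero_iff.2 hn1)
    have m2 : (z2, l2) ∈ K := h2 (mem_closedBall_zero_iff.2 hn2)
    have hmem := hKconv m1 m2 hs0 hs1' (by ring)
    have heq : s • (z1, l1) + (1-s) • (z2, l2) = (z, l) := by
      refine Prod.ext ?_ ?_
      · show s • z1 + (1-s) • z2 = z
        rw [hz1, hz2, smul_smul, smul_smul, ← add_smul]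
        have : s * (r1 / R) + (1 - s) * (r2 / R) = 1 := by
          field_simp
          linarith
        rw [this, one_smul]
      · show s * l1 + (1-s) * l2 = l
        rw [hl]
    rwa [heq] at hmem


set_option maxHeartbeats 1000000 in
/-- For a spherically symmetric convex body K cut by the hyperplane through its
center of gravity orthogonal to the axis, if C is the cone with the same base disk,
apex on the positive axis, matching Vol(C⁺) = Vol(K⁺) and Vol(C) = Vol(K), then the
axial coordinate of cg(C) is at least that of cg(K). -/
theorem cone_centerOfGravity_shift (n : ℕ)
    (K : Set (EuclideanSpace ℝ (Fin n) × ℝ))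
    (hKc : IsCompact K) (hKconv : Convex ℝ K) (hvol : 0 < (volume K).toReal)
    (hsym : ∀ lam : ℝ, {x | (x, lam) ∈ K} = ∅ ∨
      ∃ r : ℝ, 0 ≤ r ∧ {x | (x, lam) ∈ K}
        = Metric.closedBall (0 : EuclideanSpace ℝ (Fin n)) r)
    (c : ℝ) (hc : c = (volume K).toReal⁻¹ * ∫ p in K, p.2)
    (R0 A B : ℝ) (hR0 : 0 < R0) (hA : c < A) (hB : B ≤ c)
    (hbase : {x | (x, c) ∈ K} = Metric.closedBall (0 : EuclideanSpace ℝ (Fin n)) R0)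
    (C : Set (EuclideanSpace ℝ (Fin n) × ℝ))
    (hC : C = {p | p.2 ∈ Set.Icc B A ∧ ‖p.1‖ ≤ (A - p.2) / (A - c) * R0})
    (hvplus : volume (C ∩ {p | c ≤ p.2}) = volume (K ∩ {p | c ≤ p.2}))
    (hvtot : volume C = volume K) :
    (volume K).toReal⁻¹ * ∫ p in K, p.2 ≤ (volume C).toReal⁻¹ * ∫ p in C, p.2 := by
  classical
  set ρ : ℝ → ℝ := fun l => (A - l) / (A - c) * R0 with hρ
  have hAc : (0:ℝ) < A - c := by linarith
  have hρc : ρ c = R0 := by rw [hρ]; field_simp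
  have hρanti : ∀ {l1 l2 : ℝ}, l1 ≤ l2 → ρ l2 ≤ ρ l1 := by
    intro l1 l2 h
    rw [hρ]
    dsimp only
    gcongr (?_ / _) * _
    linarith
  have hρnn : ∀ {l : ℝ}, l ≤ A → 0 ≤ ρ l := by
    intro l h
    apply mul_nonneg (div_nonneg (by linarith) (le_of_lt hAc)) (le_of_lt hR0)
  -- membership in C
  have hCmem : ∀ {p : EuclideanSpace ℝ (Fin n) × ℝ}, p ∈ C ↔ (B ≤ p.2 ∧ p.2 ≤ A ∧ ‖p.1‖ ≤ ρ p.2) := by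
    intro p; rw [hC]; simp [Set.mem_Icc, hρ, and_assoc]
  -- slices of K are balls containing given points
  have hballK : ∀ {y : EuclideanSpace ℝ (Fin n)} {μ : ℝ}, (y, μ) ∈ K →
      Metric.closedBall (0:EuclideanSpace ℝ (Fin n)) ‖y‖ ⊆ {x | (x, μ) ∈ K} := by
    intro y μ hy
    rcases hsym μ with h | ⟨r, _, h⟩
    · exfalso; have : y ∈ {x | (x, μ) ∈ K} := hy
      rw [h] at this; exact this
    · rw [h]
      exact Metric.closedBall_subset_closedBall
        (by have : y ∈ Metric.closedBall (0:EuclideanSpace ℝ (Fin n)) r := h ▸ hy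
            exact mem_closedBall_zero_iff.1 this)
  have hbase_sub : Metric.closedBall (0:EuclideanSpace ℝ (Fin n)) R0 ⊆ {x | (x, c) ∈ K} := by
    rw [hbase]
  have hbase_mem : ∀ {x : EuclideanSpace ℝ (Fin n)}, (x, c) ∈ K → ‖x‖ ≤ R0 := by
    intro x hx
    have : x ∈ Metric.closedBall (0:EuclideanSpace ℝ (Fin n)) R0 := hbase ▸ hx
    exact mem_closedBall_zero_iff.1 this
  -- measurability and finiteness
  have hKmeas : MeasurableSet K := hKc.measurableSet
  have hCclosed : IsClosed C := by
    rw [hC]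
    have : {p : EuclideanSpace ℝ (Fin n) × ℝ | p.2 ∈ Set.Icc B A ∧ ‖p.1‖ ≤ (A - p.2) / (A - c) * R0}
        = ((fun p : EuclideanSpace ℝ (Fin n) × ℝ => p.2) ⁻¹' Set.Icc B A) ∩
          {p : EuclideanSpace ℝ (Fin n) × ℝ | ‖p.1‖ ≤ (A - p.2) / (A - c) * R0} := rfl
    rw [this]
    exact (isClosed_Icc.preimage continuous_snd).inter
      (isClosed_le (continuous_norm.comp continuous_fst)
        (by fun_prop))
  have hCbdd : Bornology.IsBounded C := by
    have hsub : C ⊆ Metric.closedBall (0:EuclideanSpace ℝ (Fin n)) ((A - B) / (A - c) * R0) ×ˢ Set.Icc B A := by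
      intro p hp
      rw [hCmem] at hp
      rw [Set.mem_prod]
      constructor
      · rw [mem_closedBall_zero_iff]
        calc ‖p.1‖ ≤ ρ p.2 := hp.2.2
          _ ≤ ρ B := hρanti hp.1
          _ = (A - B) / (A - c) * R0 := by rw [hρ]
      · exact ⟨hp.1, hp.2.1⟩
    exact (Metric.isBounded_closedBall.prod (Metric.isBounded_Icc (a:=B) (b:=A))).subset hsub
  have hCc : IsCompact C := Metric.isCompact_of_isClosed_isBounded hCclosed hCbdd
  have hCmeas : MeasurableSet C := hCc.measurableSet
  have hKfin : volume K ≠ ⊤ := hKc.measure_lt_top.ne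
  have hCfin : volume C ≠ ⊤ := hvtot ▸ hKfin
  set Kp := K ∩ {p : EuclideanSpace ℝ (Fin n) × ℝ | c ≤ p.2} with hKp
  set Cp := C ∩ {p : EuclideanSpace ℝ (Fin n) × ℝ | c ≤ p.2} with hCp
  have hKpfin : volume Kp ≠ ⊤ := fun h => hKfin (top_le_iff.1 (h ▸ measure_mono Set.inter_subset_left))
  -- G2 : K has no points above A
  have hG2 : ∀ {y : EuclideanSpace ℝ (Fin n)} {μ : ℝ}, (y, μ) ∈ K → μ ≤ A := by
    intro y μ hyK
    by_contra hbad
    push_neg at hbad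
    have hμc : c < μ := lt_trans hA hbad
    have hμcne : μ - c ≠ 0 := sub_ne_zero.2 (by linarith)
    -- K contains a cone with apex at height μ over the base disk
    have claim1 : ∀ ν : ℝ, c ≤ ν → ν < μ →
        Metric.closedBall (0:EuclideanSpace ℝ (Fin n)) ((μ - ν) / (μ - c) * R0)
          ⊆ {x | (x, ν) ∈ K} := by
      intro ν hcν hνμ
      set s := (μ - ν) / (μ - c) with hs
      have hs0 : 0 ≤ s := div_nonneg (by linarith) (by linarith)
      have hs1 : s ≤ 1 := by rw [hs, div_le_one (by linarith)]; linarith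
      have hcomb := comb_lemma K hKconv hbase_sub (hballK hyK) (le_of_lt hR0)
        (norm_nonneg y) hs0 hs1
        (show ν = s * c + (1 - s) * μ by rw [hs]; field_simp; ring)
      refine (Metric.closedBall_subset_closedBall ?_).trans hcomb
      nlinarith [mul_nonneg (show (0:ℝ) ≤ 1 - s by linarith) (norm_nonneg y)]
    -- Cp is contained in Kp
    have hCpKp : Cp ⊆ Kp := by
      rintro ⟨z, ν⟩ ⟨hzC, hzc⟩
      rw [hCmem] at hzC
      have hνA : ν ≤ A := hzC.2.1
      have hcν : c ≤ ν := hzc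
      refine ⟨claim1 ν hcν (lt_of_le_of_lt hνA hbad) ?_, hzc⟩
      rw [mem_closedBall_zero_iff]
      refine le_trans hzC.2.2 ?_
      rw [hρ]; dsimp only
      rw [div_mul_eq_mul_div, div_mul_eq_mul_div, div_le_div_iff₀ hAc (by linarith)]
      nlinarith [mul_nonneg (mul_nonneg (le_of_lt hR0) (show (0:ℝ) ≤ μ - A by linarith))
        (show (0:ℝ) ≤ ν - c by linarith)]
    -- the extra cylinder
    set μ2 := (A + μ) / 2 with hμ2
    have hAμ2 : A < μ2 := by rw [hμ2]; linarith
    have hμ2μ : μ2 < μ := by rw [hμ2]; linarith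
    set ε := (μ - μ2) / (μ - c) * R0 with hε
    have hεpos : 0 < ε := by
      apply mul_pos (div_pos (by linarith) (by linarith)) hR0
    set Cyl := Metric.closedBall (0:EuclideanSpace ℝ (Fin n)) ε ×ˢ Set.Ioc A μ2 with hCyl
    have hCylKp : Cyl ⊆ Kp := by
      rintro ⟨z, ν⟩ ⟨hz, hν⟩
      simp only [Set.mem_Ioc] at hν
      have hcν : c ≤ ν := by linarith [hν.1]
      refine ⟨claim1 ν hcν (lt_of_le_of_lt hν.2 hμ2μ) ?_, hcν⟩
      rw [mem_closedBall_zero_iff]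
      rw [mem_closedBall_zero_iff] at hz
      refine le_trans hz ?_
      rw [hε]
      gcongr (?_ / _) * _
      · linarith [hν.1]
    have hdisj : Disjoint Cp Cyl := by
      rw [Set.disjoint_left]
      rintro ⟨z, ν⟩ ⟨hzC, _⟩ ⟨_, hν⟩
      rw [hCmem] at hzC
      simp only [Set.mem_Ioc] at hν
      exact absurd hzC.2.1 (not_le.2 hν.1)
    have hCylmeas : MeasurableSet Cyl :=
      Metric.isClosed_closedBall.measurableSet.prod measurableSet_Ioc
    have hCylpos : 0 < volume Cyl := by
      rw [hCyl, show (volume : Measure (EuclideanSpace ℝ (Fin n) × ℝ))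
        = (volume : Measure (EuclideanSpace ℝ (Fin n))).prod volume from rfl,
        Measure.prod_prod]
      apply ENNReal.mul_pos
      · exact (lt_of_lt_of_le (measure_ball_pos volume 0 hεpos)
          (measure_mono Metric.ball_subset_closedBall)).ne'
      · rw [Real.volume_Ioc]
        exact (ENNReal.ofReal_pos.2 (by linarith)).ne'
    have hunion : Cp ∪ Cyl ⊆ Kp := Set.union_subset hCpKp hCylKp
    have hle : volume Cp + volume Cyl ≤ volume Kp := by
      rw [← measure_union hdisj hCylmeas]
      exact measure_mono hunion
    rw [hvplus] at hle
    have hfin : volume Kp ≠ ⊤ := hKpfin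
    have : volume Cyl ≤ 0 := by
      have h0 : volume Kp + volume Cyl ≤ volume Kp + 0 := by
        rw [add_zero]; exact hle
      exact (ENNReal.add_le_add_iff_left hfin).1 h0
    exact absurd this (not_le.2 hCylpos)
  -- lower bound part : below c, K is inside the cone
  have hLo : ∀ {x : EuclideanSpace ℝ (Fin n)} {l : ℝ}, (x, l) ∈ K → l < c → ‖x‖ ≤ ρ l := by
    intro x l0 hxK hl0c
    by_contra hbad
    push_neg at hbad
    have hρl0 : R0 ≤ ρ l0 := hρc ▸ hρanti (le_of_lt hl0c)
    have hn : 0 < n := by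
      rcases Nat.eq_zero_or_pos n with h0 | h
      · exfalso
        subst h0
        have hx0 : x = 0 := Subsingleton.elim _ _
        rw [hx0, norm_zero] at hbad
        linarith
      · exact h
    have hcl0 : (0:ℝ) < c - l0 := by linarith
    set P := (A - c) * ‖x‖ - (A - l0) * R0 with hP
    have hPpos : 0 < P := by
      have hb2 := hbad
      simp only [hρ] at hb2
      rw [hP]
      rw [div_mul_eq_mul_div, div_lt_iff₀ hAc] at hb2
      linarith
    -- chord estimate from the bad point
    have hgap : ∀ {y : EuclideanSpace ℝ (Fin n)} {μ : ℝ}, (y, μ) ∈ K → c < μ →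
        (c - l0) * (A - c) * ‖y‖ ≤ (A - μ) * (c - l0) * R0 - P * (μ - c) := by
      intro y μ hy hcμ
      have hμl0 : (0:ℝ) < μ - l0 := by linarith
      have hμl0ne : μ - l0 ≠ 0 := ne_of_gt hμl0
      set s := (μ - c) / (μ - l0) with hs
      have hs0 : 0 ≤ s := div_nonneg (by linarith) (by linarith)
      have hs1 : s ≤ 1 := by rw [hs, div_le_one hμl0]; linarith
      have hcomb := comb_lemma K hKconv (hballK hxK) (hballK hy) (norm_nonneg x)
        (norm_nonneg y) hs0 hs1
        (show c = s * l0 + (1 - s) * μ by rw [hs]; field_simp; ring)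
      rw [hbase] at hcomb
      have hkey : s * ‖x‖ + (1 - s) * ‖y‖ ≤ R0 :=
        radius_le_of_subset hn (add_nonneg (mul_nonneg hs0 (norm_nonneg x))
          (mul_nonneg (by linarith) (norm_nonneg y))) hcomb
      have e1 : s * (μ - l0) = μ - c := by rw [hs]; field_simp
      have e2 : (1 - s) * (μ - l0) = c - l0 := by rw [hs]; field_simp; ring
      have hkey2 : (μ - c) * ‖x‖ + (c - l0) * ‖y‖ ≤ (μ - l0) * R0 := by
        have h3 : (μ - c) * ‖x‖ + (c - l0) * ‖y‖
            = (s * ‖x‖ + (1 - s) * ‖y‖) * (μ - l0) := by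
          rw [← e1, ← e2]; ring
        rw [h3]
        calc (s * ‖x‖ + (1 - s) * ‖y‖) * (μ - l0) ≤ R0 * (μ - l0) :=
              mul_le_mul_of_nonneg_right hkey (le_of_lt hμl0)
          _ = (μ - l0) * R0 := by ring
      rw [hP]
      nlinarith [mul_le_mul_of_nonneg_right hkey2 (le_of_lt hAc)]
    -- upper part of K is inside the cone, strictly
    have hKpCp : Kp ⊆ Cp := by
      rintro ⟨y, μ⟩ ⟨hyK2, hyc⟩
      have hcμ' : c ≤ μ := hyc
      rcases eq_or_lt_of_le hcμ' with heq | hlt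
      · subst heq
        exact ⟨hCmem.2 ⟨by linarith, by linarith, by rw [hρc]; exact hbase_mem hyK2⟩, hyc⟩
      · have hg := hgap hyK2 hlt
        have hμA : μ ≤ A := by
          by_contra hbad2
          push_neg at hbad2
          nlinarith [norm_nonneg y, mul_nonneg (mul_nonneg (le_of_lt hcl0) (le_of_lt hAc)) (norm_nonneg y),
            mul_pos (mul_pos (show (0:ℝ) < μ - A by linarith) hcl0) hR0,
            mul_pos hPpos (show (0:ℝ) < μ - c by linarith)]
        have hyρ : ‖y‖ ≤ ρ μ := by
          rw [hρ]; dsimp only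
          rw [div_mul_eq_mul_div, le_div_iff₀ hAc]
          have h4 : (c - l0) * (‖y‖ * (A - c)) ≤ (c - l0) * ((A - μ) * R0) := by
            nlinarith [mul_pos hPpos (show (0:ℝ) < μ - c by linarith)]
          have := le_of_mul_le_mul_left h4 hcl0
          linarith
        exact ⟨hCmem.2 ⟨by linarith, hμA, hyρ⟩, hyc⟩
    -- construct an annulus region in Cp disjoint from K
    set η := min (min 1 ((A - c) / 4)) (P / ((c - l0) * R0 * 2)) with hη
    have hDpos : (0:ℝ) < (c - l0) * R0 * 2 := by positivity
    have hηpos : 0 < η := lt_min (lt_min one_pos (by linarith)) (div_pos hPpos hDpos)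
    have hη1 : η ≤ 1 := le_trans (min_le_left _ _) (min_le_left _ _)
    have hη2 : η ≤ (A - c) / 4 := le_trans (min_le_left _ _) (min_le_right _ _)
    have hη3 : η * ((c - l0) * R0 * 2) ≤ P := (le_div_iff₀ hDpos).1 (min_le_right _ _)
    set μ1 := c + η with hμ1
    set μ2 := c + η + η^2 with hμ2
    have hημ : η^2 ≤ η := by nlinarith
    have hμ2A : μ2 < A := by rw [hμ2]; linarith
    have hcμ1 : c < μ1 := by rw [hμ1]; linarith
    have hμ12 : μ1 < μ2 := by rw [hμ1, hμ2]; nlinarith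
    set a1 := ((A - μ1) * (c - l0) * R0 - P * (μ1 - c)) / ((c - l0) * (A - c)) with ha1
    set a2 := ρ μ2 with ha2
    have ha2pos : 0 < a2 := by
      rw [ha2, hρ]; dsimp only
      exact mul_pos (div_pos (by linarith) hAc) hR0
    have ha12 : a1 < a2 := by
      rw [ha1, div_lt_iff₀ (by positivity)]
      have he : a2 * ((c - l0) * (A - c)) = (A - μ2) * (c - l0) * R0 := by
        rw [ha2, hρ]; dsimp only; field_simp
      rw [he]
      rw [hμ1, hμ2]
      nlinarith [mul_le_mul_of_nonneg_right hη3 (le_of_lt hηpos),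
        mul_pos (mul_pos hcl0 hR0) (mul_pos hηpos hηpos)]
    set G := (Metric.closedBall (0:EuclideanSpace ℝ (Fin n)) a2
        \ Metric.closedBall 0 a1) ×ˢ Set.Ioc μ1 μ2 with hG
    have hGCp : G ⊆ Cp := by
      rintro ⟨z, μ⟩ ⟨hz, hμ⟩
      simp only [Set.mem_Ioc] at hμ
      have h1 : c ≤ μ := by linarith [hμ.1]
      refine ⟨hCmem.2 ⟨by linarith, by linarith [hμ.2, hμ2A], ?_⟩, h1⟩
      have h2 : ‖z‖ ≤ a2 := mem_closedBall_zero_iff.1 hz.1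
      exact le_trans h2 (ha2 ▸ hρanti hμ.2)
    have hGK : ∀ p ∈ G, p ∉ K := by
      rintro ⟨z, μ⟩ ⟨hz, hμ⟩ hzK
      simp only [Set.mem_Ioc] at hμ
      have hcμ : c < μ := lt_trans hcμ1 hμ.1
      have hg := hgap hzK hcμ
      have hza1 : ‖z‖ ≤ a1 := by
        rw [ha1, le_div_iff₀ (by positivity)]
        nlinarith [mul_nonneg (show (0:ℝ) ≤ μ - μ1 by linarith [hμ.1])
            (mul_nonneg (le_of_lt hcl0) (le_of_lt hR0)),
          mul_nonneg (show (0:ℝ) ≤ μ - μ1 by linarith [hμ.1]) (le_of_lt hPpos)]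
      exact hz.2 (mem_closedBall_zero_iff.2 hza1)
    have hGmeas : MeasurableSet G :=
      (measurableSet_closedBall.diff measurableSet_closedBall).prod measurableSet_Ioc
    have hGpos : 0 < volume G := by
      rw [hG, show (volume : Measure (EuclideanSpace ℝ (Fin n) × ℝ))
        = (volume : Measure (EuclideanSpace ℝ (Fin n))).prod volume from rfl,
        Measure.prod_prod]
      apply ENNReal.mul_pos
      · have hlt : volume (Metric.closedBall (0:EuclideanSpace ℝ (Fin n)) a1)
            < volume (Metric.closedBall (0:EuclideanSpace ℝ (Fin n)) a2) := by
          rcases lt_or_ge a1 0 with hneg | hnn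
          · rw [Metric.closedBall_eq_empty.2 hneg, measure_empty]
            exact lt_of_lt_of_le (measure_ball_pos volume 0 ha2pos)
              (measure_mono Metric.ball_subset_closedBall)
          · rw [Measure.addHaar_closedBall volume 0 hnn,
              Measure.addHaar_closedBall volume 0 (le_of_lt ha2pos)]
            have hfr : Module.finrank ℝ (EuclideanSpace ℝ (Fin n)) = n := by
              simp [finrank_euclideanSpace]
            rw [hfr]
            have hpow : a1 ^ n < a2 ^ n := pow_lt_pow_left₀ ha12 hnn (by omega)
            have hne0 : volume (Metric.ball (0:EuclideanSpace ℝ (Fin n)) 1) ≠ 0 :=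
              (measure_ball_pos volume 0 one_pos).ne'
            have hnetop : volume (Metric.ball (0:EuclideanSpace ℝ (Fin n)) 1) ≠ ⊤ :=
              (lt_of_le_of_lt (measure_mono Metric.ball_subset_closedBall)
                (isCompact_closedBall _ _).measure_lt_top).ne
            rw [mul_comm (ENNReal.ofReal _), mul_comm (ENNReal.ofReal _)]
            exact ENNReal.mul_lt_mul_right hne0 hnetop
              ((ENNReal.ofReal_lt_ofReal_iff (pow_pos ha2pos n)).2 hpow)
        intro h0'
        have hsub2 : Metric.closedBall (0:EuclideanSpace ℝ (Fin n)) a2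
            ⊆ Metric.closedBall (0:EuclideanSpace ℝ (Fin n)) a1
              ∪ (Metric.closedBall (0:EuclideanSpace ℝ (Fin n)) a2
                \ Metric.closedBall 0 a1) := by
          intro w hw
          by_cases hw1 : w ∈ Metric.closedBall (0:EuclideanSpace ℝ (Fin n)) a1
          · exact Or.inl hw1
          · exact Or.inr ⟨hw, hw1⟩
        have h5 : volume (Metric.closedBall (0:EuclideanSpace ℝ (Fin n)) a2)
            ≤ volume (Metric.closedBall (0:EuclideanSpace ℝ (Fin n)) a1) := by
          calc volume (Metric.closedBall (0:EuclideanSpace ℝ (Fin n)) a2)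
              ≤ volume (Metric.closedBall (0:EuclideanSpace ℝ (Fin n)) a1)
                + volume (Metric.closedBall (0:EuclideanSpace ℝ (Fin n)) a2
                  \ Metric.closedBall 0 a1) :=
                le_trans (measure_mono hsub2) (measure_union_le _ _)
            _ = volume (Metric.closedBall (0:EuclideanSpace ℝ (Fin n)) a1) := by
                rw [h0', add_zero]
        exact absurd h5 (not_le.2 hlt)
      · rw [Real.volume_Ioc]
        refine (ENNReal.ofReal_pos.2 ?_).ne'
        rw [hμ1, hμ2]; nlinarith
    have hdisjKG : Disjoint Kp G :=
      Set.disjoint_left.2 (fun p hp hpG => hGK p hpG hp.1)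
    have hle : volume Kp + volume G ≤ volume Cp := by
      rw [← measure_union hdisjKG hGmeas]
      exact measure_mono (Set.union_subset hKpCp hGCp)
    rw [hvplus] at hle
    have hcontra : volume G ≤ 0 := by
      refine (ENNReal.add_le_add_iff_left hKpfin).1 ?_
      rw [add_zero]; exact hle
    exact absurd hcontra (not_le.2 hGpos)
  -- the crossing point t above c
  set S : Set ℝ := {l | l ∈ Set.Icc c A ∧
    Metric.closedBall (0:EuclideanSpace ℝ (Fin n)) (ρ l) ⊆ {x | (x, l) ∈ K}} with hS
  have hcS : c ∈ S := ⟨⟨le_refl c, le_of_lt hA⟩, by rw [hρc]; exact hbase_sub⟩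
  have hSne : S.Nonempty := ⟨c, hcS⟩
  have hSbdd : BddAbove S := ⟨A, fun l hl => hl.1.2⟩
  set t := sSup S with ht
  have hct : c ≤ t := le_csSup hSbdd hcS
  have htA : t ≤ A := csSup_le hSne (fun l hl => hl.1.2)
  have hU1 : ∀ {z : EuclideanSpace ℝ (Fin n)} {l : ℝ}, c ≤ l → l < t → ‖z‖ ≤ ρ l → (z, l) ∈ K := by
    intro z l hcl hlt hz
    obtain ⟨l', hl'S, hll'⟩ := exists_lt_of_lt_csSup hSne hlt
    have hl'c : c < l' := lt_of_le_of_lt hcl hll'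
    have hl'A : l' ≤ A := hl'S.1.2
    have hl'cne : l' - c ≠ 0 := sub_ne_zero.2 (ne_of_gt hl'c)
    set s := (l' - l) / (l' - c) with hs
    have hs0 : 0 ≤ s := div_nonneg (by linarith) (by linarith)
    have hs1 : s ≤ 1 := by
      rw [hs, div_le_one (by linarith)]; linarith
    have hcomb := comb_lemma K hKconv hbase_sub hl'S.2 (le_of_lt hR0) (hρnn hl'A) hs0 hs1
      (show l = s * c + (1 - s) * l' by rw [hs]; field_simp; ring)
    have hrad : s * R0 + (1 - s) * ρ l' = ρ l := by
      rw [hs, hρ]; field_simp; ring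
    rw [hrad] at hcomb
    exact hcomb (mem_closedBall_zero_iff.2 hz)
  have hU2 : ∀ {y : EuclideanSpace ℝ (Fin n)} {μ : ℝ}, (y, μ) ∈ K → t < μ → ‖y‖ ≤ ρ μ := by
    intro y μ hyK htμ
    have hμA : μ ≤ A := hG2 hyK
    by_contra hbad
    push_neg at hbad
    set ν := (t + μ) / 2 with hν
    have htν : t < ν := by rw [hν]; linarith
    have hνμ : ν < μ := by rw [hν]; linarith
    have hcν : c < ν := lt_of_le_of_lt hct htν
    have hνA : ν ≤ A := le_trans (le_of_lt hνμ) hμA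
    have hμcne : μ - c ≠ 0 := sub_ne_zero.2 (by linarith)
    set s := (μ - ν) / (μ - c) with hs
    have hs0 : 0 ≤ s := div_nonneg (by linarith) (by linarith)
    have hs1 : s ≤ 1 := by rw [hs, div_le_one (by linarith)]; linarith
    have hcomb := comb_lemma K hKconv hbase_sub (hballK hyK) (le_of_lt hR0)
      (norm_nonneg y) hs0 hs1
      (show ν = s * c + (1 - s) * μ by rw [hs]; field_simp; ring)
    have hrad : ρ ν ≤ s * R0 + (1 - s) * ‖y‖ := by
      have h1 : s * R0 + (1 - s) * ρ μ = ρ ν := by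
        rw [hs, hρ]; field_simp; ring
      have h2 : 1 - s ≥ 0 := by linarith
      nlinarith [mul_le_mul_of_nonneg_left (le_of_lt hbad) h2]
    have hνS : ν ∈ S := by
      refine ⟨⟨le_of_lt hcν, hνA⟩, ?_⟩
      exact (Metric.closedBall_subset_closedBall hrad).trans hcomb
    exact absurd (le_csSup hSbdd hνS) (not_le.2 htν)
  -- integral comparison machinery
  set Km := K ∩ {p : EuclideanSpace ℝ (Fin n) × ℝ | p.2 < c} with hKm
  set Cm := C ∩ {p : EuclideanSpace ℝ (Fin n) × ℝ | p.2 < c} with hCm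
  have hmeas_ge : MeasurableSet {p : EuclideanSpace ℝ (Fin n) × ℝ | c ≤ p.2} :=
    measurableSet_le measurable_const measurable_snd
  have hmeas_lt : MeasurableSet {p : EuclideanSpace ℝ (Fin n) × ℝ | p.2 < c} :=
    measurableSet_lt measurable_snd measurable_const
  have hKpmeas : MeasurableSet Kp := hKmeas.inter hmeas_ge
  have hCpmeas : MeasurableSet Cp := hCmeas.inter hmeas_ge
  have hKmmeas : MeasurableSet Km := hKmeas.inter hmeas_lt
  have hCmmeas : MeasurableSet Cm := hCmeas.inter hmeas_lt
  have hsplitK : K = Km ∪ Kp := by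
    ext p
    simp only [hKm, hKp, Set.mem_union, Set.mem_inter_iff, Set.mem_setOf_eq]
    constructor
    · intro hp
      rcases lt_or_ge p.2 c with h | h
      · exact Or.inl ⟨hp, h⟩
      · exact Or.inr ⟨hp, h⟩
    · rintro (⟨hp, _⟩ | ⟨hp, _⟩) <;> exact hp
  have hsplitC : C = Cm ∪ Cp := by
    ext p
    simp only [hCm, hCp, Set.mem_union, Set.mem_inter_iff, Set.mem_setOf_eq]
    constructor
    · intro hp
      rcases lt_or_ge p.2 c with h | h
      · exact Or.inl ⟨hp, h⟩
      · exact Or.inr ⟨hp, h⟩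
    · rintro (⟨hp, _⟩ | ⟨hp, _⟩) <;> exact hp
  have hdisjK : Disjoint Km Kp := by
    rw [Set.disjoint_left]
    rintro p ⟨_, h1⟩ ⟨_, h2⟩
    have h1' : p.2 < c := h1
    have h2' : c ≤ p.2 := h2
    linarith
  have hdisjC : Disjoint Cm Cp := by
    rw [Set.disjoint_left]
    rintro p ⟨_, h1⟩ ⟨_, h2⟩
    have h1' : p.2 < c := h1
    have h2' : c ≤ p.2 := h2
    linarith
  have hvolKsplit : volume K = volume Km + volume Kp := by
    conv_lhs => rw [hsplitK]
    exact measure_union hdisjK hKpmeas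
  have hvolCsplit : volume C = volume Cm + volume Cp := by
    conv_lhs => rw [hsplitC]
    exact measure_union hdisjC hCpmeas
  have hvolm : volume Cm = volume Km := by
    have h1 : volume Cm + volume Cp = volume Km + volume Kp := by
      rw [← hvolCsplit, ← hvolKsplit, hvtot]
    rw [hvplus] at h1
    exact WithTop.add_right_cancel hKpfin h1
  -- integrability
  have hintK : IntegrableOn (fun p : EuclideanSpace ℝ (Fin n) × ℝ => p.2) K :=
    continuous_snd.continuousOn.integrableOn_compact hKc
  have hintC : IntegrableOn (fun p : EuclideanSpace ℝ (Fin n) × ℝ => p.2) C :=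
    continuous_snd.continuousOn.integrableOn_compact hCc
  have hintsub : ∀ b : ℝ,
      IntegrableOn (fun p : EuclideanSpace ℝ (Fin n) × ℝ => p.2 - b) K ∧
      IntegrableOn (fun p : EuclideanSpace ℝ (Fin n) × ℝ => p.2 - b) C := by
    intro b
    exact ⟨(continuous_snd.sub continuous_const).continuousOn.integrableOn_compact hKc,
      (continuous_snd.sub continuous_const).continuousOn.integrableOn_compact hCc⟩
  -- generic comparison
  have hcompare : ∀ (s u : Set (EuclideanSpace ℝ (Fin n) × ℝ)) (b : ℝ),
      MeasurableSet s → MeasurableSet u →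
      IntegrableOn (fun p : EuclideanSpace ℝ (Fin n) × ℝ => p.2 - b) s →
      IntegrableOn (fun p : EuclideanSpace ℝ (Fin n) × ℝ => p.2 - b) u →
      (∀ p : EuclideanSpace ℝ (Fin n) × ℝ, p ∈ u → p.2 < b → p ∈ s) →
      (∀ p : EuclideanSpace ℝ (Fin n) × ℝ, p ∈ s → b < p.2 → p ∈ u) →
      (∫ p in s, (p.2 - b)) ≤ ∫ p in u, (p.2 - b) := by
    intro s u b hs hu his hiu hlow hhigh
    rw [← integral_indicator hs, ← integral_indicator hu]
    have hIs : Integrable (s.indicator (fun p : EuclideanSpace ℝ (Fin n) × ℝ => p.2 - b)) :=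
      (integrable_indicator_iff hs).2 his
    have hIu : Integrable (u.indicator (fun p : EuclideanSpace ℝ (Fin n) × ℝ => p.2 - b)) :=
      (integrable_indicator_iff hu).2 hiu
    refine integral_mono hIs hIu ?_
    intro p
    by_cases hps : p ∈ s <;> by_cases hpu : p ∈ u
    · rw [Set.indicator_of_mem hps, Set.indicator_of_mem hpu]
    · rw [Set.indicator_of_mem hps, Set.indicator_of_notMem hpu]
      have h1 : ¬ b < p.2 := fun h => hpu (hhigh p hps h)
      push_neg at h1
      simp only
      linarith
    · rw [Set.indicator_of_notMem hps, Set.indicator_of_mem hpu]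
      have h1 : ¬ p.2 < b := fun h => hps (hlow p hpu h)
      push_neg at h1
      simp only
      linarith
    · rw [Set.indicator_of_notMem hps, Set.indicator_of_notMem hpu]
  -- rewrite set integrals of (p.2 - b)
  have hsetint : ∀ (s : Set (EuclideanSpace ℝ (Fin n) × ℝ)) (b : ℝ),
      IntegrableOn (fun p : EuclideanSpace ℝ (Fin n) × ℝ => p.2) s → volume s ≠ ⊤ →
      (∫ p in s, (p.2 - b)) = (∫ p in s, p.2) - (volume s).toReal * b := by
    intro s b hi hfin
    rw [integral_sub hi (integrableOn_const hfin)]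
    rw [setIntegral_const, smul_eq_mul]
    rfl
  -- the upper comparison
  have hKpfin' : volume Kp ≠ ⊤ := hKpfin
  have hCpfin : volume Cp ≠ ⊤ := by rw [hvplus]; exact hKpfin
  have hKmfin : volume Km ≠ ⊤ :=
    fun h => hKfin (top_le_iff.1 (h ▸ measure_mono Set.inter_subset_left))
  have hCmfin : volume Cm ≠ ⊤ := by rw [hvolm]; exact hKmfin
  have hup : (∫ p in Kp, p.2) ≤ ∫ p in Cp, p.2 := by
    have hcmp := hcompare Kp Cp t hKpmeas hCpmeas
      (((hintsub t).1).mono_set Set.inter_subset_left)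
      (((hintsub t).2).mono_set Set.inter_subset_left)
      (fun p hp hplt => by
        rcases hp with ⟨hpC, hpc⟩
        have hpc' : c ≤ p.2 := hpc
        rw [hCmem] at hpC
        have := hU1 (z := p.1) (l := p.2) hpc' hplt hpC.2.2
        exact ⟨by rwa [Prod.mk.eta] at this, hpc⟩)
      (fun p hp hpgt => by
        rcases hp with ⟨hpK, hpc⟩
        have hpc' : c ≤ p.2 := hpc
        have hpK' : (p.1, p.2) ∈ K := by rwa [Prod.mk.eta]
        have h1 := hU2 hpK' hpgt
        have h2 := hG2 hpK'
        exact ⟨hCmem.2 ⟨le_trans hB hpc', h2, h1⟩, hpc⟩)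
    rw [hsetint Kp t (hintK.mono_set Set.inter_subset_left) hKpfin',
      hsetint Cp t (hintC.mono_set Set.inter_subset_left) hCpfin] at hcmp
    have hveq : (volume Kp).toReal = (volume Cp).toReal := by rw [hvplus]
    rw [hveq] at hcmp
    exact (sub_le_sub_iff_right _).1 hcmp
  have hlow : (∫ p in Km, p.2) ≤ ∫ p in Cm, p.2 := by
    have hcmp := hcompare Km Cm B hKmmeas hCmmeas
      (((hintsub B).1).mono_set Set.inter_subset_left)
      (((hintsub B).2).mono_set Set.inter_subset_left)
      (fun p hp hplt => by
        rcases hp with ⟨hpC, _⟩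
        rw [hCmem] at hpC
        exact absurd hpC.1 (not_le.2 hplt))
      (fun p hp hpgt => by
        rcases hp with ⟨hpK, hpc⟩
        have hpc' : p.2 < c := hpc
        have hpK' : (p.1, p.2) ∈ K := by rwa [Prod.mk.eta]
        have h1 := hLo hpK' hpc'
        exact ⟨hCmem.2 ⟨le_of_lt hpgt, by linarith, h1⟩, hpc⟩)
    rw [hsetint Km B (hintK.mono_set Set.inter_subset_left) hKmfin,
      hsetint Cm B (hintC.mono_set Set.inter_subset_left) hCmfin] at hcmp
    have hveq : (volume Km).toReal = (volume Cm).toReal := by rw [hvolm]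
    rw [hveq] at hcmp
    exact (sub_le_sub_iff_right _).1 hcmp
  have htotal : (∫ p in K, p.2) ≤ ∫ p in C, p.2 := by
    have hK2 : (∫ p in K, p.2) = (∫ p in Km, p.2) + ∫ p in Kp, p.2 := by
      conv_lhs => rw [hsplitK]
      exact setIntegral_union hdisjK hKpmeas
        (hintK.mono_set Set.inter_subset_left) (hintK.mono_set Set.inter_subset_left)
    have hC2 : (∫ p in C, p.2) = (∫ p in Cm, p.2) + ∫ p in Cp, p.2 := by
      conv_lhs => rw [hsplitC]
      exact setIntegral_union hdisjC hCpmeas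
        (hintC.mono_set Set.inter_subset_left) (hintC.mono_set Set.inter_subset_left)
    rw [hK2, hC2]
    linarith
  rw [hvtot]
  exact mul_le_mul_of_nonneg_left htotal (inv_nonneg.2 ENNReal.toReal_nonneg)
end

section
/- If K^+ is the apex-side part of a spherically symmetric convex body K above a hyperplane W, and C^+ is the cone over the base disk K ∩ W with apex Z on the axis such that Vol(C^+) = Vol(K^+), then either K^+ = C^+ or the apex Z does not belong to K^+; equivalently, the cone C^+ is at least as elongated along the axis as K^+. -/
open MeasureTheory

/-- If C⁺ is the cone over the base disk K ∩ W with apex Z on the axis such that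
Vol(C⁺) = Vol(K⁺), then either K⁺ = C⁺ or the apex Z does not belong to K⁺. -/
theorem cone_apex_not_in_body (n : ℕ)
    (K : Set (EuclideanSpace ℝ (Fin n) × ℝ))
    (hKc : IsCompact K) (hKconv : Convex ℝ K) (hvol : 0 < (volume K).toReal)
    (hsym : ∀ lam : ℝ, {x | (x, lam) ∈ K} = ∅ ∨
      ∃ ρ : ℝ, 0 ≤ ρ ∧ {x | (x, lam) ∈ K}
        = Metric.closedBall (0 : EuclideanSpace ℝ (Fin n)) ρ)
    (c R0 A : ℝ) (hR0 : 0 < R0) (hA : c < A)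
    (hbase : {x | (x, c) ∈ K} = Metric.closedBall (0 : EuclideanSpace ℝ (Fin n)) R0)
    (Kp Cp : Set (EuclideanSpace ℝ (Fin n) × ℝ))
    (hKp : Kp = K ∩ {p | c ≤ p.2})
    (hCp : Cp = {p | p.2 ∈ Set.Icc c A ∧ ‖p.1‖ ≤ (A - p.2) / (A - c) * R0})
    (hveq : volume Cp = volume Kp) :
    Kp = Cp ∨ ((0 : EuclideanSpace ℝ (Fin n)), A) ∉ Kp := by
  by_cases hZ : ((0 : EuclideanSpace ℝ (Fin n)), A) ∈ Kp
  swap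
  · exact Or.inr hZ
  left
  haveI hHaar : (volume : Measure (EuclideanSpace ℝ (Fin n) × ℝ)).IsAddHaarMeasure := by
    rw [Measure.volume_eq_prod]; infer_instance
  have hAc : (0 : ℝ) < A - c := sub_pos.mpr hA
  have hZK : ((0 : EuclideanSpace ℝ (Fin n)), A) ∈ K := by
    rw [hKp] at hZ; exact hZ.1
  -- the cone is contained in the body
  have hsub : Cp ⊆ Kp := by
    intro p hp
    rw [hCp] at hp
    obtain ⟨⟨hpc, hpA⟩, hpn⟩ := hp
    rw [hKp]
    refine ⟨?_, hpc⟩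
    set t : ℝ := (A - p.2) / (A - c) with ht
    have ht0 : 0 ≤ t := div_nonneg (by linarith) hAc.le
    have ht1 : t ≤ 1 := by rw [ht, div_le_one hAc]; linarith
    rcases eq_or_lt_of_le ht0 with h0 | h0
    · -- degenerate case : p is the apex
      have hp1 : p.1 = 0 := by
        have h1 : ‖p.1‖ ≤ 0 := by
          have h := hpn; rw [← h0] at h; simpa using h
        simpa [norm_le_zero_iff] using h1
      have hp2 : p.2 = A := by
        have h2 : A - p.2 = 0 := by
          rcases div_eq_zero_iff.mp h0.symm with h | h
          · exact h
          · exact absurd h hAc.ne'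
        linarith
      have : p = ((0 : EuclideanSpace ℝ (Fin n)), A) := Prod.ext hp1 hp2
      rw [this]; exact hZK
    · -- proper convex combination of a base point and the apex
      set x : EuclideanSpace ℝ (Fin n) := t⁻¹ • p.1 with hx
      have hxK : (x, c) ∈ K := by
        have hmem : x ∈ {x | (x, c) ∈ K} := by
          rw [hbase, Metric.mem_closedBall, dist_zero_right, hx, norm_smul,
            norm_inv, Real.norm_eq_abs, abs_of_pos h0]
          have htR : t * R0 = (A - p.2) / (A - c) * R0 := by rw [ht]
          rw [inv_mul_le_iff₀ h0]
          calc ‖p.1‖ ≤ (A - p.2) / (A - c) * R0 := hpn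
            _ = t * R0 := by rw [ht]
        exact hmem
      have htAc : t * (A - c) = A - p.2 := div_mul_cancel₀ _ hAc.ne'
      have key : p = t • ((x, c) : EuclideanSpace ℝ (Fin n) × ℝ)
          + (1 - t) • (((0 : EuclideanSpace ℝ (Fin n)), A)) := by
        apply Prod.ext
        · show p.1 = t • x + (1 - t) • (0 : EuclideanSpace ℝ (Fin n))
          rw [hx, smul_smul, mul_inv_cancel₀ h0.ne', one_smul, smul_zero, add_zero]
        · show p.2 = t * c + (1 - t) * A
          nlinarith [htAc]
      rw [key]
      exact hKconv hxK hZK h0.le (by linarith) (by ring)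
  -- basic structure of Kp and Cp
  have hclosed2 : IsClosed {p : EuclideanSpace ℝ (Fin n) × ℝ | c ≤ p.2} :=
    isClosed_le continuous_const continuous_snd
  have hKpcompact : IsCompact Kp := by rw [hKp]; exact hKc.inter_right hclosed2
  have hKpconv : Convex ℝ Kp := by
    rw [hKp]
    exact hKconv.inter (convex_halfSpace_ge (IsLinearMap.mk (fun _ _ => rfl) (fun _ _ => rfl)) c)
  have hCpclosed : IsClosed Cp := by
    rw [hCp, Set.setOf_and]
    exact (isClosed_Icc.preimage continuous_snd).inter
      (isClosed_le (continuous_norm.comp continuous_fst)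
        (((continuous_const.sub continuous_snd).div_const _).mul continuous_const))
  have hfin : volume Kp ≠ ⊤ := hKpcompact.measure_lt_top.ne
  have hdiff : volume (Kp \ Cp) = 0 := by
    rw [measure_diff hsub hCpclosed.measurableSet.nullMeasurableSet (hveq ▸ hfin), hveq,
      tsub_self]
  -- the cone has positive volume : it contains a nonempty open set
  have hOopen : IsOpen ({p : EuclideanSpace ℝ (Fin n) × ℝ | ‖p.1‖ < R0 / 2}
      ∩ {p | p.2 ∈ Set.Ioo c ((c + A) / 2)}) :=
    (isOpen_lt (continuous_norm.comp continuous_fst) continuous_const).inter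
      (isOpen_Ioo.preimage continuous_snd)
  have hOsub : ({p : EuclideanSpace ℝ (Fin n) × ℝ | ‖p.1‖ < R0 / 2}
      ∩ {p | p.2 ∈ Set.Ioo c ((c + A) / 2)}) ⊆ Cp := by
    rintro p ⟨h1, h2, h3⟩
    rw [hCp]
    refine ⟨⟨h2.le, by linarith⟩, ?_⟩
    have hhalf : R0 / 2 ≤ (A - p.2) / (A - c) * R0 := by
      rw [div_mul_eq_mul_div, le_div_iff₀ hAc]
      nlinarith
    have h1' : ‖p.1‖ < R0 / 2 := h1
    linarith
  have hOne : (({p : EuclideanSpace ℝ (Fin n) × ℝ | ‖p.1‖ < R0 / 2}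
      ∩ {p | p.2 ∈ Set.Ioo c ((c + A) / 2)})).Nonempty := by
    refine ⟨((0 : EuclideanSpace ℝ (Fin n)), c + (A - c) / 4), ?_, ?_, ?_⟩
    · simpa using by positivity
    · show c < c + (A - c) / 4; linarith
    · show c + (A - c) / 4 < (c + A) / 2; linarith
  have hCpos : 0 < volume Cp :=
    lt_of_lt_of_le (hOopen.measure_pos volume hOne) (measure_mono hOsub)
  have hKpos : volume Kp ≠ 0 := by rw [← hveq]; exact hCpos.ne'
  -- the body has nonempty interior
  have hint : (interior Kp).Nonempty := by
    by_contra h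
    rw [Set.not_nonempty_iff_eq_empty] at h
    have hspan : affineSpan ℝ Kp ≠ ⊤ := by
      intro htop
      obtain ⟨y, hy⟩ := hKpconv.interior_nonempty_iff_affineSpan_eq_top.mpr htop
      rw [h] at hy; exact hy
    exact hKpos (measure_mono_null (subset_affineSpan ℝ Kp)
      (Measure.addHaar_affineSubspace volume _ hspan))
  -- the body is contained in the cone
  have hsub2 : Kp ⊆ Cp := by
    intro x hx
    by_contra hxC
    obtain ⟨y, hy⟩ := hint
    obtain ⟨ε, hε, hball⟩ := Metric.isOpen_iff.mp hCpclosed.isOpen_compl x hxC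
    set t : ℝ := min (1 / 2) (ε / (2 * (‖y - x‖ + 1))) with htdef
    have ht0 : 0 < t := lt_min (by norm_num) (div_pos hε (by positivity))
    have ht1 : t ≤ 1 / 2 := min_le_left _ _
    set z := t • y + (1 - t) • x with hz
    have hzint : z ∈ interior Kp :=
      hKpconv.combo_interior_self_mem_interior hy hx ht0 (by linarith) (by ring)
    have hznot : z ∉ Cp := by
      refine hball ?_
      rw [Metric.mem_ball, dist_eq_norm]
      have hzx : z - x = t • (y - x) := by
        rw [hz, smul_sub, sub_smul, one_smul]; abel
      rw [hzx, norm_smul, Real.norm_eq_abs, abs_of_pos ht0]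
      have h2 : t ≤ ε / (2 * (‖y - x‖ + 1)) := min_le_right _ _
      have hn : (0 : ℝ) ≤ ‖y - x‖ := norm_nonneg _
      calc t * ‖y - x‖ ≤ ε / (2 * (‖y - x‖ + 1)) * ‖y - x‖ := by gcongr
        _ < ε := by
            rw [div_mul_eq_mul_div, div_lt_iff₀ (by positivity)]
            nlinarith
    have hss : interior Kp ∩ Cpᶜ ⊆ Kp \ Cp := fun w hw => ⟨interior_subset hw.1, hw.2⟩
    have hnull : volume (interior Kp ∩ Cpᶜ) = 0 := measure_mono_null hss hdiff
    have hzne : (interior Kp ∩ Cpᶜ).Nonempty := ⟨z, Set.mem_inter hzint hznot⟩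
    exact absurd hnull
      ((isOpen_interior.inter hCpclosed.isOpen_compl).measure_pos volume hzne).ne'
  exact Set.Subset.antisymm hsub2 hsub
end
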